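/- Let φ ∈ J_{k,L;t}(χ₁ × ν) be a nonzero holomorphic Jacobi form of weight k and index t > 0 for an even positive definite lattice L. (1) If the rescaled lattice L(t) is even, i.e. t(x,x) ∈ 2ℤ for all x ∈ L, then the Heisenberg character ν is trivial (ν([x,y;(1/2)(x,y)]) = 1 for all x,y ∈ L), and the same function φ is a holomorphic Jacobi form of weight k and index 1 for the lattice L(t). (2) If L(t) is integral but not even, i.e. t(x,y) ∈ ℤ for all x,y ∈ L but t(x₀,x₀) is odd for some x₀ ∈ L, then ν has order exactly 2 on the integral Heisenberg group, and the same function φ is a holomorphic Jacobi form of weight k and index 1/2 for the even lattice L(2t). -/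
import Mathlib


open Complex Matrix
open scoped Real BigOperators Classical

noncomputable section

abbrev SL2Z := Matrix.SpecialLinearGroup (Fin 2) ℤ

/-- The integral bilinear form attached to a Gram matrix `S`. -/
def bilinZ {ι : Type*} [Fintype ι] (S : Matrix ι ι ℤ) (x y : ι → ℤ) : ℤ :=
  ∑ i, ∑ j, x i * S i j * y j

def bilinQ {ι : Type*} [Fintype ι] (S : Matrix ι ι ℤ) (x y : ι → ℚ) : ℚ :=
  ∑ i, ∑ j, x i * (S i j : ℚ) * y j

def bilinR {ι : Type*} [Fintype ι] (S : Matrix ι ι ℤ) (x y : ι → ℝ) : ℝ :=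
  ∑ i, ∑ j, x i * (S i j : ℝ) * y j

def bilinC {ι : Type*} [Fintype ι] (S : Matrix ι ι ℤ) (x y : ι → ℂ) : ℂ :=
  ∑ i, ∑ j, x i * (S i j : ℂ) * y j

/-- `S` is the Gram matrix of an even positive definite lattice. -/
structure IsEvenPosDef {ι : Type*} [Fintype ι] (S : Matrix ι ι ℤ) : Prop where
  symm : S.IsSymm
  posdef : ∀ x : ι → ℚ, x ≠ 0 → 0 < bilinQ S x x
  even_diag : ∀ i, (2 : ℤ) ∣ S i i

/-- `l ∈ (1/2) L^∨`, written in lattice coordinates:  `2(l,x) ∈ ℤ` for every lattice vector. -/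
def InHalfDual {ι : Type*} [Fintype ι] (S : Matrix ι ι ℤ) (l : ι → ℚ) : Prop :=
  ∀ x : ι → ℤ, ∃ m : ℤ, 2 * bilinQ S l (fun i => (x i : ℚ)) = m

/-- `φ` is a holomorphic Jacobi form of weight `k` and index `t` for the lattice `(ℤ^ι, S)`
with `SL₂(ℤ)`-character (multiplier system) `χ`, Heisenberg character `ν`,
and Fourier coefficients `f`. -/
structure IsJacobiForm {ι : Type*} [Fintype ι] (S : Matrix ι ι ℤ) (k t : ℚ)
    (χ : SL2Z → ℂ) (ν : (ι → ℤ) → (ι → ℤ) → ℂ)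
    (f : ℚ × (ι → ℚ) → ℂ) (φ : ℂ → (ι → ℂ) → ℂ) : Prop where
  holo : DifferentiableOn ℂ (fun p : ℂ × (ι → ℂ) => φ p.1 p.2) {p | 0 < p.1.im}
  modular : ∀ A : SL2Z, ∀ τ : ℂ, 0 < τ.im → ∀ z : ι → ℂ,
    φ (((A.1 0 0 : ℂ) * τ + (A.1 0 1 : ℂ)) / ((A.1 1 0 : ℂ) * τ + (A.1 1 1 : ℂ)))
        (fun i => z i / ((A.1 1 0 : ℂ) * τ + (A.1 1 1 : ℂ)))
      = χ A * ((A.1 1 0 : ℂ) * τ + (A.1 1 1 : ℂ)) ^ (k : ℂ)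
        * Complex.exp ((π : ℂ) * I * (t : ℂ) * (A.1 1 0 : ℂ) * bilinC S z z
            / ((A.1 1 0 : ℂ) * τ + (A.1 1 1 : ℂ)))
        * φ τ z
  elliptic : ∀ x y : ι → ℤ, ∀ τ : ℂ, 0 < τ.im → ∀ z : ι → ℂ,
    φ τ (fun i => z i + (x i : ℂ) * τ + (y i : ℂ))
      = ν x y * Complex.exp (-((π : ℂ) * I * (t : ℂ))
            * ((bilinZ S x x : ℂ) * τ + 2 * bilinC S (fun i => (x i : ℂ)) z))
        * φ τ z
  support : ∀ p : ℚ × (ι → ℚ), f p ≠ 0 →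
    0 ≤ p.1 ∧ InHalfDual S p.2 ∧ 0 ≤ 2 * p.1 * t - bilinQ S p.2 p.2
  expansion : ∀ τ : ℂ, 0 < τ.im → ∀ z : ι → ℂ,
    HasSum (fun p : ℚ × (ι → ℚ) =>
        f p * Complex.exp (2 * (π : ℂ) * I *
          ((p.1 : ℂ) * τ + bilinC S (fun i => (p.2 i : ℂ)) z))) (φ τ z)

/-- The Fourier coefficients `f` are supported on indices of positive hyperbolic norm
(cusp form condition). -/
def IsCuspSupport {ι : Type*} [Fintype ι] (S : Matrix ι ι ℤ) (t : ℚ)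
    (f : ℚ × (ι → ℚ) → ℂ) : Prop :=
  ∀ p : ℚ × (ι → ℚ), f p ≠ 0 → 0 < 2 * p.1 * t - bilinQ S p.2 p.2

/-- `c` is a root of unity. -/
def HasFiniteOrder (c : ℂ) : Prop := ∃ N : ℕ, 0 < N ∧ c ^ N = 1


/-! ### Auxiliary lemmas -/

section Aux

variable {ι : Type*} [Fintype ι] (S : Matrix ι ι ℤ)

lemma bilinC_add_right (x y z : ι → ℂ) :
    bilinC S x (fun i => y i + z i) = bilinC S x y + bilinC S x z := by
  simp [bilinC, mul_add, Finset.sum_add_distrib]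

lemma bilinC_add_left (x y z : ι → ℂ) :
    bilinC S (fun i => x i + y i) z = bilinC S x z + bilinC S y z := by
  simp [bilinC, add_mul, Finset.sum_add_distrib]

lemma bilinC_smul_right (c : ℂ) (x y : ι → ℂ) :
    bilinC S x (fun i => c * y i) = c * bilinC S x y := by
  unfold bilinC; rw [Finset.mul_sum]
  refine Finset.sum_congr rfl fun i _ => ?_
  rw [Finset.mul_sum]; exact Finset.sum_congr rfl fun j _ => by ring

lemma bilinC_smul_left (c : ℂ) (x y : ι → ℂ) :
    bilinC S (fun i => c * x i) y = c * bilinC S x y := by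
  unfold bilinC; rw [Finset.mul_sum]
  refine Finset.sum_congr rfl fun i _ => ?_
  rw [Finset.mul_sum]; exact Finset.sum_congr rfl fun j _ => by ring

lemma bilinC_symm (h : S.IsSymm) (x y : ι → ℂ) : bilinC S x y = bilinC S y x := by
  unfold bilinC; rw [Finset.sum_comm]
  refine Finset.sum_congr rfl fun i _ => Finset.sum_congr rfl fun j _ => ?_
  rw [← h.apply i j]; ring

lemma bilinC_cast (x y : ι → ℤ) :
    bilinC S (fun i => (x i : ℂ)) (fun i => (y i : ℂ)) = ((bilinZ S x y : ℤ) : ℂ) := by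
  simp [bilinC, bilinZ]

lemma bilinC_castQ (x y : ι → ℚ) :
    bilinC S (fun i => (x i : ℂ)) (fun i => (y i : ℂ)) = ((bilinQ S x y : ℚ) : ℂ) := by
  simp [bilinC, bilinQ]

lemma bilinQ_cast (x y : ι → ℤ) :
    bilinQ S (fun i => (x i : ℚ)) (fun i => (y i : ℚ)) = ((bilinZ S x y : ℤ) : ℚ) := by
  simp [bilinQ, bilinZ]

lemma bilinQ_smul_left (c : ℚ) (x y : ι → ℚ) :
    bilinQ S (fun i => c * x i) y = c * bilinQ S x y := by
  unfold bilinQ; rw [Finset.mul_sum]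
  refine Finset.sum_congr rfl fun i _ => ?_
  rw [Finset.mul_sum]; exact Finset.sum_congr rfl fun j _ => by ring

lemma bilinQ_smul_right (c : ℚ) (x y : ι → ℚ) :
    bilinQ S x (fun i => c * y i) = c * bilinQ S x y := by
  unfold bilinQ; rw [Finset.mul_sum]
  refine Finset.sum_congr rfl fun i _ => ?_
  rw [Finset.mul_sum]; exact Finset.sum_congr rfl fun j _ => by ring

lemma bilinZ_add_left (x y z : ι → ℤ) :
    bilinZ S (x + y) z = bilinZ S x z + bilinZ S y z := by
  simp [bilinZ, add_mul, Finset.sum_add_distrib]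

lemma bilinZ_add_right (x y z : ι → ℤ) :
    bilinZ S x (y + z) = bilinZ S x y + bilinZ S x z := by
  simp [bilinZ, mul_add, Finset.sum_add_distrib]

lemma bilinZ_symm (h : S.IsSymm) (x y : ι → ℤ) : bilinZ S x y = bilinZ S y x := by
  unfold bilinZ; rw [Finset.sum_comm]
  refine Finset.sum_congr rfl fun i _ => Finset.sum_congr rfl fun j _ => ?_
  rw [← h.apply i j]; ring

lemma bilinZ_zero_left (y : ι → ℤ) : bilinZ S 0 y = 0 := by simp [bilinZ]

lemma bilinZ_single (i j : ι) :
    bilinZ S (Pi.single i 1) (Pi.single j 1) = S i j := by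
  simp [bilinZ, Pi.single_apply]

/-- cast-add on the left slot -/
lemma bilinC_addZ_left (x y : ι → ℤ) (z : ι → ℂ) :
    bilinC S (fun i => ((x + y) i : ℂ)) z
      = bilinC S (fun i => (x i : ℂ)) z + bilinC S (fun i => (y i : ℂ)) z := by
  rw [show (fun i => ((x + y) i : ℂ)) = fun i => (x i : ℂ) + (y i : ℂ) from
    funext fun i => by push_cast [Pi.add_apply]; ring]
  exact bilinC_add_left S _ _ _

lemma bilinC_expand (x : ι → ℤ) (z : ι → ℂ) (a b : ι → ℤ) (τ : ℂ) :
    bilinC S (fun i => (x i : ℂ)) (fun i => z i + (a i : ℂ) * τ + (b i : ℂ))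
      = bilinC S (fun i => (x i : ℂ)) z + (bilinZ S x a : ℂ) * τ + (bilinZ S x b : ℂ) := by
  have h : ∀ i j, (x i : ℂ) * (S i j : ℂ) * (z j + (a j : ℂ) * τ + (b j : ℂ))
      = (x i : ℂ) * (S i j : ℂ) * z j + ((x i : ℂ) * (S i j : ℂ) * (a j : ℂ)) * τ
        + (x i : ℂ) * (S i j : ℂ) * (b j : ℂ) := fun i j => by ring
  simp only [bilinC, bilinZ, h, Finset.sum_add_distrib, ← Finset.sum_mul]
  push_cast
  ring

lemma bilinZ_expandQ (h : S.IsSymm) (a b : ι → ℤ) :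
    bilinZ S (a + b) (a + b) = bilinZ S a a + bilinZ S b b + 2 * bilinZ S a b := by
  rw [bilinZ_add_left, bilinZ_add_right, bilinZ_add_right, bilinZ_symm S h b a]; ring

lemma bilinC_expand_right (x z : ι → ℂ) (a b : ι → ℤ) (τ : ℂ) :
    bilinC S x (fun i => z i + (a i : ℂ) * τ + (b i : ℂ))
      = bilinC S x z + bilinC S x (fun i => (a i : ℂ)) * τ + bilinC S x (fun i => (b i : ℂ)) := by
  have h : ∀ i j, x i * (S i j : ℂ) * (z j + (a j : ℂ) * τ + (b j : ℂ))
      = x i * (S i j : ℂ) * z j + (x i * (S i j : ℂ) * (a j : ℂ)) * τ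
        + x i * (S i j : ℂ) * (b j : ℂ) := fun i j => by ring
  simp only [bilinC, h, Finset.sum_add_distrib, ← Finset.sum_mul]

lemma bilinC_mulc_left (c : ℂ) (x y : ι → ℂ) :
    bilinC S (fun i => x i * c) y = c * bilinC S x y := by
  unfold bilinC; rw [Finset.mul_sum]
  refine Finset.sum_congr rfl fun i _ => ?_
  rw [Finset.mul_sum]; exact Finset.sum_congr rfl fun j _ => by ring

lemma bilinC_expandQ (h : S.IsSymm) (z : ι → ℂ) (a b : ι → ℤ) (τ : ℂ) :
    bilinC S (fun i => z i + (a i : ℂ) * τ + (b i : ℂ)) (fun i => z i + (a i : ℂ) * τ + (b i : ℂ))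
      = bilinC S z z + (bilinZ S a a : ℂ) * τ ^ 2 + (bilinZ S b b : ℂ)
        + 2 * bilinC S (fun i => (a i : ℂ)) z * τ + 2 * bilinC S (fun i => (b i : ℂ)) z
        + 2 * (bilinZ S a b : ℂ) * τ := by
  have h1 : bilinC S (fun i => z i + (a i : ℂ) * τ + (b i : ℂ))
        (fun i => z i + (a i : ℂ) * τ + (b i : ℂ))
      = bilinC S z (fun i => z i + (a i : ℂ) * τ + (b i : ℂ))
        + bilinC S (fun i => (a i : ℂ) * τ) (fun i => z i + (a i : ℂ) * τ + (b i : ℂ))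
        + bilinC S (fun i => (b i : ℂ)) (fun i => z i + (a i : ℂ) * τ + (b i : ℂ)) := by
    have h2 := bilinC_add_left S (fun i => z i + (a i : ℂ) * τ) (fun i => (b i : ℂ))
      (fun i => z i + (a i : ℂ) * τ + (b i : ℂ))
    have h3 := bilinC_add_left S z (fun i => (a i : ℂ) * τ)
      (fun i => z i + (a i : ℂ) * τ + (b i : ℂ))
    rw [h2, h3]
  rw [h1, bilinC_mulc_left, bilinC_expand_right, bilinC_expand_right, bilinC_expand_right,
    bilinC_symm S h z (fun i => (a i : ℂ)), bilinC_symm S h z (fun i => (b i : ℂ)),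
    bilinC_cast, bilinC_cast, bilinC_cast,
    bilinC_cast, bilinZ_symm S h b a]
  ring

end Aux

section Aux2

variable {ι : Type*} [Fintype ι] (S : Matrix ι ι ℤ)

lemma bilinZ_neg_left (x y : ι → ℤ) : bilinZ S (-x) y = -bilinZ S x y := by
  simp [bilinZ, neg_mul, Finset.sum_neg_distrib]

lemma bilinZ_neg_right (x y : ι → ℤ) : bilinZ S x (-y) = -bilinZ S x y := by
  simp [bilinZ, mul_neg, Finset.sum_neg_distrib]

lemma bilinC_negZ_left (x : ι → ℤ) (z : ι → ℂ) :
    bilinC S (fun i => ((-x) i : ℂ)) z = -bilinC S (fun i => (x i : ℂ)) z := by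
  rw [show (fun i => ((-x) i : ℂ)) = fun i => (-1 : ℂ) * (x i : ℂ) from
    funext fun i => by push_cast [Pi.neg_apply]; ring, bilinC_smul_left]
  ring

lemma bilinC_div_right (c : ℂ) (x z : ι → ℂ) :
    bilinC S x (fun i => z i / c) = bilinC S x z / c := by
  rw [show (fun i => z i / c) = fun i => c⁻¹ * z i from
    funext fun i => by rw [div_eq_mul_inv, mul_comm], bilinC_smul_right, inv_mul_eq_div]

lemma hasFiniteOrder_ne_zero {c : ℂ} (h : HasFiniteOrder c) : c ≠ 0 := by
  rintro rfl
  obtain ⟨N, hN, h⟩ := h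
  rw [zero_pow hN.ne'] at h
  exact zero_ne_one h

lemma im_neg_one_div_pos {τ : ℂ} (h : 0 < τ.im) : 0 < ((-1 : ℂ)/τ).im := by
  have hτ : τ ≠ 0 := by intro h0; rw [h0] at h; simp at h
  rw [show (-1/τ : ℂ) = -τ⁻¹ by rw [neg_div, one_div], Complex.neg_im, Complex.inv_im]
  have h2 := Complex.normSq_pos.mpr hτ
  rw [neg_div, neg_neg]
  positivity

def Tmat : SL2Z := ⟨!![1,1;0,1], by simp [Matrix.det_fin_two_of]⟩
def Wmat : SL2Z := ⟨!![0,-1;1,0], by simp [Matrix.det_fin_two_of]⟩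

lemma nu_formula (hsym : S.IsSymm) (k t : ℚ)
    (χ : SL2Z → ℂ) (hχ : ∀ A, HasFiniteOrder (χ A))
    (ν : (ι → ℤ) → (ι → ℤ) → ℂ) (hν : ∀ x y, HasFiniteOrder (ν x y))
    (f : ℚ × (ι → ℚ) → ℂ) (φ : ℂ → (ι → ℂ) → ℂ) (hφ : IsJacobiForm S k t χ ν f φ)
    (τ₀ : ℂ) (z₀ : ι → ℂ) (hτ₀ : 0 < τ₀.im) (hφ0 : φ τ₀ z₀ ≠ 0)
    (hint : ∀ x y : ι → ℤ, ∃ m : ℤ, t * (bilinZ S x y : ℚ) = m) :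
    ∀ x y : ι → ℤ, ν x y
      = Complex.exp (-((π : ℂ) * I * (t : ℂ)) * ((bilinZ S x x : ℂ) + (bilinZ S y y : ℂ))) := by
  have hνne : ∀ x y, ν x y ≠ 0 := fun x y => hasFiniteOrder_ne_zero (hν x y)
  have hτ0ne : τ₀ ≠ 0 := by intro h0; rw [h0] at hτ₀; simp at hτ₀
  have hintC : ∀ a b : ι → ℤ, ∃ m : ℤ, (t : ℂ) * ((bilinZ S a b : ℤ) : ℂ) = (m : ℂ) := by
    intro a b
    obtain ⟨m, hm⟩ := hint a b
    exact ⟨m, by exact_mod_cast congrArg (fun q : ℚ => (q : ℂ)) hm⟩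
  have hexp1 : ∀ a b : ι → ℤ, Complex.exp ((π : ℂ) * I * (t : ℂ) * (2 * (bilinZ S a b : ℂ))) = 1 := by
    intro a b
    obtain ⟨m, hm⟩ := hintC a b
    rw [show (π : ℂ) * I * (t : ℂ) * (2 * (bilinZ S a b : ℂ)) = (m : ℂ) * (2 * (π : ℂ) * I) by
      rw [← hm]; ring]
    exact Complex.exp_int_mul_two_pi_mul_I m
  have hexp2 : ∀ a b : ι → ℤ,
      Complex.exp (-((π : ℂ) * I * (t : ℂ)) * (2 * (bilinZ S a b : ℂ))) = 1 := by
    intro a b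
    rw [show -((π : ℂ) * I * (t : ℂ)) * (2 * (bilinZ S a b : ℂ))
      = -((π : ℂ) * I * (t : ℂ) * (2 * (bilinZ S a b : ℂ))) by ring,
      Complex.exp_neg, hexp1 a b]
    norm_num
  -- the cocycle relation
  have cocycle : ∀ x₁ y₁ x₂ y₂ : ι → ℤ, ν (x₁ + x₂) (y₁ + y₂) = ν x₁ y₁ * ν x₂ y₂ := by
    intro x₁ y₁ x₂ y₂
    have e1 := hφ.elliptic (x₁ + x₂) (y₁ + y₂) τ₀ hτ₀ z₀
    have e2 := hφ.elliptic x₁ y₁ τ₀ hτ₀ (fun i => z₀ i + (x₂ i : ℂ) * τ₀ + (y₂ i : ℂ))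
    have e3 := hφ.elliptic x₂ y₂ τ₀ hτ₀ z₀
    have harg : (fun i => (fun i => z₀ i + (x₂ i : ℂ) * τ₀ + (y₂ i : ℂ)) i
          + (x₁ i : ℂ) * τ₀ + (y₁ i : ℂ))
        = (fun i => z₀ i + (((x₁ + x₂) i : ℤ) : ℂ) * τ₀ + (((y₁ + y₂) i : ℤ) : ℂ)) := by
      funext i; push_cast [Pi.add_apply]; ring
    rw [harg, e1, e3] at e2
    have h3 : ν (x₁ + x₂) (y₁ + y₂) *
        Complex.exp (-((π : ℂ) * I * (t : ℂ)) * ((bilinZ S (x₁ + x₂) (x₁ + x₂) : ℂ) * τ₀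
          + 2 * bilinC S (fun i => (((x₁ + x₂) i : ℤ) : ℂ)) z₀))
        = ν x₁ y₁ * ν x₂ y₂ *
          (Complex.exp (-((π : ℂ) * I * (t : ℂ)) * ((bilinZ S x₁ x₁ : ℂ) * τ₀
            + 2 * bilinC S (fun i => ((x₁ i : ℤ) : ℂ))
                (fun i => z₀ i + (x₂ i : ℂ) * τ₀ + (y₂ i : ℂ)))) *
           Complex.exp (-((π : ℂ) * I * (t : ℂ)) * ((bilinZ S x₂ x₂ : ℂ) * τ₀
            + 2 * bilinC S (fun i => ((x₂ i : ℤ) : ℂ)) z₀))) :=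
      mul_right_cancel₀ hφ0 (by linear_combination e2)
    have hE : -((π : ℂ) * I * (t : ℂ)) * ((bilinZ S (x₁ + x₂) (x₁ + x₂) : ℂ) * τ₀
          + 2 * bilinC S (fun i => (((x₁ + x₂) i : ℤ) : ℂ)) z₀)
        = (-((π : ℂ) * I * (t : ℂ)) * ((bilinZ S x₁ x₁ : ℂ) * τ₀
            + 2 * bilinC S (fun i => ((x₁ i : ℤ) : ℂ))
                (fun i => z₀ i + (x₂ i : ℂ) * τ₀ + (y₂ i : ℂ)))
          + -((π : ℂ) * I * (t : ℂ)) * ((bilinZ S x₂ x₂ : ℂ) * τ₀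
            + 2 * bilinC S (fun i => ((x₂ i : ℤ) : ℂ)) z₀))
          + (π : ℂ) * I * (t : ℂ) * (2 * (bilinZ S x₁ y₂ : ℂ)) := by
      rw [bilinZ_expandQ S hsym, bilinC_addZ_left, bilinC_expand S x₁ z₀ x₂ y₂ τ₀]
      push_cast
      ring
    rw [hE, Complex.exp_add, Complex.exp_add, hexp1 x₁ y₂, mul_one] at h3
    exact mul_right_cancel₀
      (mul_ne_zero (Complex.exp_ne_zero _) (Complex.exp_ne_zero _)) h3
  -- T-transformation relation
  have hTmod : ∀ τ : ℂ, 0 < τ.im → ∀ z : ι → ℂ, φ (τ + 1) z = χ Tmat * φ τ z := by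
    intro τ hτ z
    have h := hφ.modular Tmat τ hτ z
    have h00 : ((Tmat.1 0 0 : ℤ) : ℂ) = 1 := by norm_num [Tmat]
    have h01 : ((Tmat.1 0 1 : ℤ) : ℂ) = 1 := by norm_num [Tmat]
    have h10 : ((Tmat.1 1 0 : ℤ) : ℂ) = 0 := by norm_num [Tmat]
    have h11 : ((Tmat.1 1 1 : ℤ) : ℂ) = 1 := by norm_num [Tmat]
    rw [h00, h01, h10, h11] at h
    simp only [zero_mul, zero_add, one_mul, div_one, mul_zero, zero_div, mul_one,
      Complex.exp_zero, one_cpow] at h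
    rw [← h]
  have hT : ∀ x y : ι → ℤ, ν x (x + y)
      = ν x y * Complex.exp (-((π : ℂ) * I * (t : ℂ)) * (bilinZ S x x : ℂ)) := by
    intro x y
    have hτ1 : 0 < (τ₀ + 1).im := by simpa using hτ₀
    have e1 := hφ.elliptic x y (τ₀ + 1) hτ1 z₀
    have e2 := hφ.elliptic x (x + y) τ₀ hτ₀ z₀
    have harg : (fun i => z₀ i + (x i : ℂ) * (τ₀ + 1) + (y i : ℂ))
        = (fun i => z₀ i + (x i : ℂ) * τ₀ + (((x + y) i : ℤ) : ℂ)) := by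
      funext i; push_cast [Pi.add_apply]; ring
    rw [harg, hTmod τ₀ hτ₀ _, hTmod τ₀ hτ₀ z₀, e2] at e1
    have hχT : χ Tmat ≠ 0 := hasFiniteOrder_ne_zero (hχ Tmat)
    have h3 : ν x (x + y) *
        Complex.exp (-((π : ℂ) * I * (t : ℂ)) * ((bilinZ S x x : ℂ) * τ₀
          + 2 * bilinC S (fun i => ((x i : ℤ) : ℂ)) z₀))
        = (ν x y * Complex.exp (-((π : ℂ) * I * (t : ℂ)) * (bilinZ S x x : ℂ))) *
          Complex.exp (-((π : ℂ) * I * (t : ℂ)) * ((bilinZ S x x : ℂ) * τ₀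
            + 2 * bilinC S (fun i => ((x i : ℤ) : ℂ)) z₀)) := by
      have h4 := mul_right_cancel₀ hφ0 (by linear_combination e1 :
        (χ Tmat * (ν x (x + y) *
            Complex.exp (-((π : ℂ) * I * (t : ℂ)) * ((bilinZ S x x : ℂ) * τ₀
              + 2 * bilinC S (fun i => ((x i : ℤ) : ℂ)) z₀)))) * φ τ₀ z₀
          = (ν x y * Complex.exp (-((π : ℂ) * I * (t : ℂ)) * ((bilinZ S x x : ℂ) * (τ₀ + 1)
              + 2 * bilinC S (fun i => ((x i : ℤ) : ℂ)) z₀)) * χ Tmat) * φ τ₀ z₀)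
      have h5 := mul_left_cancel₀ hχT (by linear_combination h4 :
        χ Tmat * (ν x (x + y) *
            Complex.exp (-((π : ℂ) * I * (t : ℂ)) * ((bilinZ S x x : ℂ) * τ₀
              + 2 * bilinC S (fun i => ((x i : ℤ) : ℂ)) z₀)))
          = χ Tmat * (ν x y * Complex.exp (-((π : ℂ) * I * (t : ℂ)) * ((bilinZ S x x : ℂ) * (τ₀ + 1)
              + 2 * bilinC S (fun i => ((x i : ℤ) : ℂ)) z₀))))
      rw [h5, show -((π : ℂ) * I * (t : ℂ)) * ((bilinZ S x x : ℂ) * (τ₀ + 1)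
            + 2 * bilinC S (fun i => ((x i : ℤ) : ℂ)) z₀)
          = -((π : ℂ) * I * (t : ℂ)) * (bilinZ S x x : ℂ)
            + -((π : ℂ) * I * (t : ℂ)) * ((bilinZ S x x : ℂ) * τ₀
              + 2 * bilinC S (fun i => ((x i : ℤ) : ℂ)) z₀) from by ring, Complex.exp_add]
      ring
    exact mul_right_cancel₀ (Complex.exp_ne_zero _) h3
  -- W-transformation (inversion) relation
  have hχW : χ Wmat ≠ 0 := hasFiniteOrder_ne_zero (hχ Wmat)
  have hk0 : τ₀ ^ (k : ℂ) ≠ 0 := by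
    rw [Complex.cpow_def_of_ne_zero hτ0ne]; exact Complex.exp_ne_zero _
  have hWmod : ∀ τ : ℂ, 0 < τ.im → ∀ z : ι → ℂ,
      φ ((-1 : ℂ)/τ) (fun i => z i / τ)
        = χ Wmat * τ ^ (k : ℂ)
          * Complex.exp ((π : ℂ) * I * (t : ℂ) * bilinC S z z / τ) * φ τ z := by
    intro τ hτ z
    have h := hφ.modular Wmat τ hτ z
    have h00 : ((Wmat.1 0 0 : ℤ) : ℂ) = 0 := by norm_num [Wmat]
    have h01 : ((Wmat.1 0 1 : ℤ) : ℂ) = -1 := by norm_num [Wmat]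
    have h10 : ((Wmat.1 1 0 : ℤ) : ℂ) = 1 := by norm_num [Wmat]
    have h11 : ((Wmat.1 1 1 : ℤ) : ℂ) = 0 := by norm_num [Wmat]
    rw [h00, h01, h10, h11] at h
    simp only [zero_mul, zero_add, one_mul, add_zero, mul_one] at h
    exact h
  have hWν : ∀ x y : ι → ℤ, ν y (-x) = ν x y := by
    intro x y
    have hτ' := im_neg_one_div_pos hτ₀
    have e1 := hφ.elliptic x y ((-1 : ℂ)/τ₀) hτ' (fun i => z₀ i / τ₀)
    have e2 := hφ.elliptic y (-x) τ₀ hτ₀ z₀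
    have hw := hWmod τ₀ hτ₀ (fun i => z₀ i + (y i : ℂ) * τ₀ + (((-x) i : ℤ) : ℂ))
    beta_reduce at hw
    have harg : (fun i => (fun i => z₀ i / τ₀) i + (x i : ℂ) * ((-1 : ℂ)/τ₀) + (y i : ℂ))
        = (fun i => (z₀ i + (y i : ℂ) * τ₀ + (((-x) i : ℤ) : ℂ)) / τ₀) := by
      funext i
      push_cast [Pi.neg_apply]
      field_simp
      ring
    rw [harg, hw, e2, hWmod τ₀ hτ₀ z₀] at e1
    -- cancel φ₀
    have h4 := mul_right_cancel₀ hφ0 (by linear_combination e1 :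
      (χ Wmat * τ₀ ^ (k : ℂ) * (ν y (-x) *
          (Complex.exp ((π : ℂ) * I * (t : ℂ)
              * bilinC S (fun i => z₀ i + (y i : ℂ) * τ₀ + (((-x) i : ℤ) : ℂ))
                  (fun i => z₀ i + (y i : ℂ) * τ₀ + (((-x) i : ℤ) : ℂ)) / τ₀)
            * Complex.exp (-((π : ℂ) * I * (t : ℂ)) * ((bilinZ S y y : ℂ) * τ₀
                + 2 * bilinC S (fun i => ((y i : ℤ) : ℂ)) z₀))))) * φ τ₀ z₀
        = (χ Wmat * τ₀ ^ (k : ℂ) * (ν x y *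
          (Complex.exp (-((π : ℂ) * I * (t : ℂ)) * ((bilinZ S x x : ℂ) * ((-1 : ℂ)/τ₀)
              + 2 * bilinC S (fun i => ((x i : ℤ) : ℂ)) (fun i => z₀ i / τ₀)))
            * Complex.exp ((π : ℂ) * I * (t : ℂ) * bilinC S z₀ z₀ / τ₀)))) * φ τ₀ z₀)
    have h5 := mul_left_cancel₀ (mul_ne_zero hχW hk0) h4
    rw [← Complex.exp_add, ← Complex.exp_add] at h5
    rw [show (π : ℂ) * I * (t : ℂ)
            * bilinC S (fun i => z₀ i + (y i : ℂ) * τ₀ + (((-x) i : ℤ) : ℂ))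
                (fun i => z₀ i + (y i : ℂ) * τ₀ + (((-x) i : ℤ) : ℂ)) / τ₀
          + -((π : ℂ) * I * (t : ℂ)) * ((bilinZ S y y : ℂ) * τ₀
              + 2 * bilinC S (fun i => ((y i : ℤ) : ℂ)) z₀)
        = (-((π : ℂ) * I * (t : ℂ)) * ((bilinZ S x x : ℂ) * ((-1 : ℂ)/τ₀)
              + 2 * bilinC S (fun i => ((x i : ℤ) : ℂ)) (fun i => z₀ i / τ₀))
            + (π : ℂ) * I * (t : ℂ) * bilinC S z₀ z₀ / τ₀)
          + -((π : ℂ) * I * (t : ℂ)) * (2 * (bilinZ S x y : ℂ)) from by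
      rw [bilinC_expandQ S hsym z₀ y (-x) τ₀, bilinC_div_right, bilinC_negZ_left,
        bilinZ_neg_left, bilinZ_neg_right, bilinZ_neg_right, neg_neg,
        bilinZ_symm S hsym y x]
      push_cast
      field_simp
      ring] at h5
    rw [Complex.exp_add, hexp2 x y, mul_one] at h5
    exact mul_right_cancel₀ (Complex.exp_ne_zero _) h5
  have hν0 : ∀ x : ι → ℤ, ν 0 x
      = Complex.exp (-((π : ℂ) * I * (t : ℂ)) * (bilinZ S x x : ℂ)) := by
    intro x
    have h1 := hT x 0
    have h2 := cocycle x 0 0 x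
    rw [add_zero] at h1
    rw [add_zero, zero_add] at h2
    exact mul_left_cancel₀ (hνne x 0) (h2.symm.trans h1)
  have hx0 : ∀ x : ι → ℤ, ν x 0 = ν 0 x := by
    intro x
    have h := hWν 0 x
    rwa [neg_zero] at h
  intro x y
  have h2 := cocycle x 0 0 y
  rw [add_zero, zero_add] at h2
  rw [h2, hx0 x, hν0 x, hν0 y, ← Complex.exp_add]
  congr 1
  ring

end Aux2

section Rescale

variable {ι : Type*} [Fintype ι]

lemma exp_neg_pi_I_int (n : ℤ) :
    Complex.exp ((n : ℂ) * ((π : ℂ) * I)) = 1 ∨ Complex.exp ((n : ℂ) * ((π : ℂ) * I)) = -1 := by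
  rw [Complex.exp_int_mul, Complex.exp_pi_mul_I]
  rcases Int.even_or_odd n with he | ho
  · exact Or.inl he.neg_one_zpow
  · exact Or.inr ho.neg_one_zpow

lemma rescale (S S' : Matrix ι ι ℤ) (k t u c : ℚ) (hc : 0 < c) (huc : u * c = t)
    (hS' : ∀ i j, ((S' i j : ℤ) : ℚ) = c * (S i j : ℚ))
    (χ : SL2Z → ℂ) (ν ν' : (ι → ℤ) → (ι → ℤ) → ℂ)
    (f : ℚ × (ι → ℚ) → ℂ) (φ : ℂ → (ι → ℂ) → ℂ)
    (hφ : IsJacobiForm S k t χ ν f φ) (hνν : ∀ x y, ν' x y = ν x y) :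
    IsJacobiForm S' k u χ ν' (fun p => f (p.1, fun i => c * p.2 i)) φ := by
  have hS'C : ∀ z w : ι → ℂ, bilinC S' z w = (c : ℂ) * bilinC S z w := by
    intro z w
    unfold bilinC
    rw [Finset.mul_sum]
    refine Finset.sum_congr rfl fun i _ => ?_
    rw [Finset.mul_sum]
    refine Finset.sum_congr rfl fun j _ => ?_
    have hC : ((S' i j : ℤ) : ℂ) = (c : ℂ) * ((S i j : ℤ) : ℂ) := by
      exact_mod_cast congrArg (fun q : ℚ => (q : ℂ)) (hS' i j)
    rw [hC]; ring
  have hS'Q : ∀ z w : ι → ℚ, bilinQ S' z w = c * bilinQ S z w := by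
    intro z w
    unfold bilinQ
    rw [Finset.mul_sum]
    refine Finset.sum_congr rfl fun i _ => ?_
    rw [Finset.mul_sum]
    refine Finset.sum_congr rfl fun j _ => ?_
    rw [hS' i j]; ring
  have hS'Z : ∀ x y : ι → ℤ, ((bilinZ S' x y : ℤ) : ℂ) = (c : ℂ) * ((bilinZ S x y : ℤ) : ℂ) := by
    intro x y
    rw [← bilinC_cast, hS'C, bilinC_cast]
  have htc : (t : ℂ) = (u : ℂ) * (c : ℂ) := by exact_mod_cast congrArg (fun q : ℚ => (q : ℂ)) huc.symm
  constructor
  · exact hφ.holo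
  · intro A τ hτ z
    have harg : (π : ℂ) * I * (u : ℂ) * (A.1 1 0 : ℂ) * bilinC S' z z
          / ((A.1 1 0 : ℂ) * τ + (A.1 1 1 : ℂ))
        = (π : ℂ) * I * (t : ℂ) * (A.1 1 0 : ℂ) * bilinC S z z
          / ((A.1 1 0 : ℂ) * τ + (A.1 1 1 : ℂ)) := by
      rw [hS'C, htc]; ring
    rw [harg]
    exact hφ.modular A τ hτ z
  · intro x y τ hτ z
    have harg : -((π : ℂ) * I * (u : ℂ)) * ((bilinZ S' x x : ℂ) * τ
          + 2 * bilinC S' (fun i => (x i : ℂ)) z)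
        = -((π : ℂ) * I * (t : ℂ)) * ((bilinZ S x x : ℂ) * τ
          + 2 * bilinC S (fun i => (x i : ℂ)) z) := by
      rw [hS'Z, hS'C, htc]; ring
    rw [harg, hνν]
    exact hφ.elliptic x y τ hτ z
  · intro p hp
    obtain ⟨h1, h2, h3⟩ := hφ.support (p.1, fun i => c * p.2 i) hp
    dsimp only at h2 h3
    refine ⟨h1, ?_, ?_⟩
    · intro x
      obtain ⟨m, hm⟩ := h2 x
      rw [bilinQ_smul_left] at hm
      exact ⟨m, by rw [hS'Q]; linarith⟩
    · rw [bilinQ_smul_left, bilinQ_smul_right] at h3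
      rw [hS'Q]
      nlinarith [h3, hc, huc]
  · intro τ hτ z
    have h := hφ.expansion τ hτ z
    let σ : (ℚ × (ι → ℚ)) ≃ (ℚ × (ι → ℚ)) :=
      { toFun := fun p => (p.1, fun i => c * p.2 i)
        invFun := fun p => (p.1, fun i => c⁻¹ * p.2 i)
        left_inv := fun p => Prod.ext rfl (funext fun i => inv_mul_cancel_left₀ hc.ne' _)
        right_inv := fun p => Prod.ext rfl (funext fun i => mul_inv_cancel_left₀ hc.ne' _) }
    have hfun : (fun p : ℚ × (ι → ℚ) =>
          f (p.1, fun i => c * p.2 i) * Complex.exp (2 * (π : ℂ) * I *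
            ((p.1 : ℂ) * τ + bilinC S' (fun i => (p.2 i : ℂ)) z)))
        = (fun q : ℚ × (ι → ℚ) => f q * Complex.exp (2 * (π : ℂ) * I *
            ((q.1 : ℂ) * τ + bilinC S (fun i => (q.2 i : ℂ)) z))) ∘ σ := by
      funext p
      have hb : bilinC S (fun i => ((c * p.2 i : ℚ) : ℂ)) z
          = bilinC S' (fun i => (p.2 i : ℂ)) z := by
        rw [hS'C, show (fun i => ((c * p.2 i : ℚ) : ℂ)) = fun i => (c : ℂ) * (p.2 i : ℂ) from
          funext fun i => by push_cast; ring, bilinC_smul_left]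
      simp only [Function.comp_apply, σ, Equiv.coe_fn_mk]
      rw [hb]
    rw [hfun]
    exact σ.hasSum_iff.mpr h

end Rescale

/-- For a nonzero Jacobi form of index `t`:
(1) if `L(t)` is even then the Heisenberg character is trivial and `φ` is a Jacobi form of
index `1` for `L(t)`; (2) if `L(t)` is integral but odd then the Heisenberg character has order
exactly two and `φ` is a Jacobi form of index `1/2` for the even lattice `L(2t)`. -/
theorem statement3 {ι : Type*} [Fintype ι] (S : Matrix ι ι ℤ) (hS : IsEvenPosDef S)
    (k t : ℚ) (ht : 0 < t)
    (χ : SL2Z → ℂ) (hχ : ∀ A, HasFiniteOrder (χ A))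
    (ν : (ι → ℤ) → (ι → ℤ) → ℂ) (hν : ∀ x y, HasFiniteOrder (ν x y))
    (f : ℚ × (ι → ℚ) → ℂ) (φ : ℂ → (ι → ℂ) → ℂ)
    (hφ : IsJacobiForm S k t χ ν f φ)
    (hne : ∃ (τ : ℂ) (z : ι → ℂ), 0 < τ.im ∧ φ τ z ≠ 0) :
    ((∀ x : ι → ℤ, ∃ m : ℤ, t * (bilinZ S x x : ℚ) = 2 * m) →
      (∀ x y : ι → ℤ, ν x y = 1) ∧
      ∃ (S' : Matrix ι ι ℤ) (g : ℚ × (ι → ℚ) → ℂ),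
        (∀ i j, (S' i j : ℚ) = t * (S i j : ℚ)) ∧
        IsJacobiForm S' k 1 χ (fun _ _ => 1) g φ) ∧
    ((∀ x y : ι → ℤ, ∃ m : ℤ, t * (bilinZ S x y : ℚ) = m) →
     (∃ (x₀ : ι → ℤ) (m : ℤ), t * (bilinZ S x₀ x₀ : ℚ) = 2 * m + 1) →
      ((∀ x y : ι → ℤ, ν x y = 1 ∨ ν x y = -1) ∧ (∃ x y : ι → ℤ, ν x y = -1)) ∧
      ∃ (S' : Matrix ι ι ℤ) (g : ℚ × (ι → ℚ) → ℂ),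
        (∀ i j, (S' i j : ℚ) = 2 * t * (S i j : ℚ)) ∧
        IsJacobiForm S' k (1/2) χ ν g φ) := by
  obtain ⟨τ₀, z₀, hτ₀, hφ0⟩ := hne
  constructor
  · -- Part 1
    intro heven
    have hint : ∀ x y : ι → ℤ, ∃ m : ℤ, t * (bilinZ S x y : ℚ) = m := by
      intro x y
      obtain ⟨m1, h1⟩ := heven (x + y)
      obtain ⟨m2, h2⟩ := heven x
      obtain ⟨m3, h3⟩ := heven y
      refine ⟨m1 - m2 - m3, ?_⟩
      have hex := bilinZ_expandQ S hS.symm x y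
      have h4 := congrArg (fun n : ℤ => t * (n : ℚ)) hex
      push_cast at h4 ⊢
      linarith
    have hformula := nu_formula S hS.symm k t χ hχ ν hν f φ hφ τ₀ z₀ hτ₀ hφ0 hint
    have hνtriv : ∀ x y : ι → ℤ, ν x y = 1 := by
      intro x y
      rw [hformula x y]
      obtain ⟨m2, h2⟩ := heven x
      obtain ⟨m3, h3⟩ := heven y
      have h2' : (t : ℂ) * ((bilinZ S x x : ℤ) : ℂ) = 2 * (m2 : ℂ) := by
        exact_mod_cast congrArg (fun q : ℚ => (q : ℂ)) h2
      have h3' : (t : ℂ) * ((bilinZ S y y : ℤ) : ℂ) = 2 * (m3 : ℂ) := by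
        exact_mod_cast congrArg (fun q : ℚ => (q : ℂ)) h3
      rw [show -((π : ℂ) * I * (t : ℂ)) * ((bilinZ S x x : ℂ) + (bilinZ S y y : ℂ))
          = ((-(m2 + m3) : ℤ) : ℂ) * (2 * (π : ℂ) * I) from by
        push_cast
        linear_combination (-((π : ℂ) * I)) * h2' + (-((π : ℂ) * I)) * h3']
      exact Complex.exp_int_mul_two_pi_mul_I _
    refine ⟨hνtriv, ?_⟩
    have hSij : ∀ i j, ∃ m : ℤ, t * (S i j : ℚ) = m := by
      intro i j
      obtain ⟨m, hm⟩ := hint (Pi.single i 1) (Pi.single j 1)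
      rw [bilinZ_single] at hm
      exact ⟨m, hm⟩
    have hcast : ∀ i j, (((t * (S i j : ℚ)).num : ℤ) : ℚ) = t * (S i j : ℚ) := by
      intro i j
      obtain ⟨m, hm⟩ := hSij i j
      rw [hm, Rat.num_intCast]
    exact ⟨fun i j => (t * (S i j : ℚ)).num, fun p => f (p.1, fun i => t * p.2 i),
      hcast,
      rescale S _ k t 1 t ht (by ring) hcast χ ν (fun _ _ => 1) f φ hφ
        (fun x y => (hνtriv x y).symm)⟩
  · -- Part 2
    rintro hint ⟨x₀, m₀, hx₀⟩
    have hformula := nu_formula S hS.symm k t χ hχ ν hν f φ hφ τ₀ z₀ hτ₀ hφ0 hint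
    constructor
    · constructor
      · intro x y
        rw [hformula x y]
        obtain ⟨m2, h2⟩ := hint x x
        obtain ⟨m3, h3⟩ := hint y y
        have h2' : (t : ℂ) * ((bilinZ S x x : ℤ) : ℂ) = (m2 : ℂ) := by
          exact_mod_cast congrArg (fun q : ℚ => (q : ℂ)) h2
        have h3' : (t : ℂ) * ((bilinZ S y y : ℤ) : ℂ) = (m3 : ℂ) := by
          exact_mod_cast congrArg (fun q : ℚ => (q : ℂ)) h3
        rw [show -((π : ℂ) * I * (t : ℂ)) * ((bilinZ S x x : ℂ) + (bilinZ S y y : ℂ))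
            = ((-(m2 + m3) : ℤ) : ℂ) * ((π : ℂ) * I) from by
          push_cast
          linear_combination (-((π : ℂ) * I)) * h2' + (-((π : ℂ) * I)) * h3']
        exact exp_neg_pi_I_int _
      · refine ⟨0, x₀, ?_⟩
        rw [hformula 0 x₀, bilinZ_zero_left]
        have h2' : (t : ℂ) * ((bilinZ S x₀ x₀ : ℤ) : ℂ) = 2 * (m₀ : ℂ) + 1 := by
          exact_mod_cast congrArg (fun q : ℚ => (q : ℂ)) hx₀
        rw [show -((π : ℂ) * I * (t : ℂ)) * (((0 : ℤ) : ℂ) + (bilinZ S x₀ x₀ : ℂ))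
            = ((-(2 * m₀ + 1) : ℤ) : ℂ) * ((π : ℂ) * I) from by
          push_cast
          linear_combination (-((π : ℂ) * I)) * h2']
        rw [Complex.exp_int_mul, Complex.exp_pi_mul_I]
        exact Odd.neg_one_zpow ⟨-m₀ - 1, by ring⟩
    · have hSij : ∀ i j, ∃ m : ℤ, 2 * t * (S i j : ℚ) = m := by
        intro i j
        obtain ⟨m, hm⟩ := hint (Pi.single i 1) (Pi.single j 1)
        rw [bilinZ_single] at hm
        exact ⟨2 * m, by push_cast; linarith⟩
      have hcast : ∀ i j, (((2 * t * (S i j : ℚ)).num : ℤ) : ℚ) = 2 * t * (S i j : ℚ) := by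
        intro i j
        obtain ⟨m, hm⟩ := hSij i j
        rw [hm, Rat.num_intCast]
      exact ⟨fun i j => (2 * t * (S i j : ℚ)).num, fun p => f (p.1, fun i => 2 * t * p.2 i),
        hcast,
        rescale S _ k t (1/2) (2 * t) (by linarith) (by ring) hcast χ ν ν f φ hφ
          (fun _ _ => rfl)⟩
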